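/- The operator L defined by (L a)(k) = a(k+1) + a(k-1) + 2 cos(ωk) a(k) on N-periodic vectors commutes with the centered discrete Fourier transform: F ∘ L = L ∘ F. -/

import Mathlib

open Real Finset Complex

/-- The centered index set `I_N = {-⌈N/2⌉+1, ..., ⌊N/2⌋}`. -/
noncomputable def In (N : ℕ) : Finset ℤ := Finset.Icc (1 - ((N : ℤ) + 1) / 2) ((N : ℤ) / 2)

/-- The centered discrete Fourier transform `(F a)(l) = N^{-1/2} ∑_{k ∈ I_N} e^{-iωkl} a(k)`,
with `ω = 2π/N`. -/
noncomputable def cdft (N : ℕ) (a : ℤ → ℂ) (l : ℤ) : ℂ :=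
  (1 / Real.sqrt N : ℝ) * ∑ k ∈ In N, Complex.exp (-Complex.I * (2 * π / N) * k * l) * a k

/-- The operator `(L a)(k) = a(k+1) + a(k-1) + 2 cos(ωk) a(k)`, with `ω = 2π/N`. -/
noncomputable def Lop (N : ℕ) (a : ℤ → ℂ) (k : ℤ) : ℂ :=
  a (k + 1) + a (k - 1) + 2 * Real.cos (2 * π * k / N) * a k

-- shift lemma
lemma sum_shift {N : ℕ} (hN : 1 ≤ N) (f : ℤ → ℂ) (hf : ∀ k, f (k + N) = f k) :
    ∑ k ∈ In N, f (k + 1) = ∑ k ∈ In N, f k := by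
  set m : ℤ := 1 - ((N : ℤ) + 1) / 2 with hm
  set M : ℤ := (N : ℤ) / 2 with hM
  have hmM : m ≤ M := by omega
  have hMm : M + 1 = m + N := by omega
  have h1 : ∑ k ∈ In N, f (k + 1) = ∑ k ∈ Finset.Icc (m + 1) (M + 1), f k := by
    rw [In, ← hm, ← hM, ← Finset.map_add_right_Icc, Finset.sum_map]
    rfl
  have h2 : Finset.Icc (m + 1) (M + 1) = insert (M + 1) (Finset.Icc (m + 1) M) := by
    ext x; simp only [Finset.mem_insert, Finset.mem_Icc]; omega
  have h3 : Finset.Icc m M = insert m (Finset.Icc (m + 1) M) := by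
    ext x; simp only [Finset.mem_insert, Finset.mem_Icc]; omega
  rw [h1, h2, In, ← hm, ← hM, h3, Finset.sum_insert (by simp), Finset.sum_insert (by simp)]
  rw [hMm, hf m]

lemma sum_shift' {N : ℕ} (hN : 1 ≤ N) (f : ℤ → ℂ) (hf : ∀ k, f (k + N) = f k) :
    ∑ k ∈ In N, f (k - 1) = ∑ k ∈ In N, f k := by
  have := sum_shift hN (fun k => f (k - 1)) (fun k => by
    show f (k + (N : ℤ) - 1) = f (k - 1); rw [show k + (N : ℤ) - 1 = (k - 1) + N by ring, hf])
  simp only [add_sub_cancel_right] at this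
  rw [← this]


lemma exp_per (N : ℕ) (hN : N ≠ 0) (k l : ℤ) :
    Complex.exp (-Complex.I * (2 * π / N) * ((k : ℂ) + N) * l)
      = Complex.exp (-Complex.I * (2 * π / N) * k * l) := by
  have hNc : (N : ℂ) ≠ 0 := Nat.cast_ne_zero.mpr hN
  have h : -Complex.I * (2 * π / N) * ((k : ℂ) + N) * l
      = -Complex.I * (2 * π / N) * k * l + ((-l : ℤ) : ℂ) * (2 * π * Complex.I) := by
    push_cast; field_simp; ring
  rw [h, Complex.exp_add, Complex.exp_int_mul_two_pi_mul_I, mul_one]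

theorem stmt_12 (N : ℕ) (hN : 2 ≤ N) (a : ℤ → ℂ) (hper : ∀ k : ℤ, a (k + N) = a k) :
    ∀ l : ℤ, cdft N (Lop N a) l = Lop N (cdft N a) l := by
  intro l
  have hN0 : N ≠ 0 := by omega
  have hN1 : 1 ≤ N := by omega
  have hNc : (N : ℂ) ≠ 0 := Nat.cast_ne_zero.mpr hN0
  simp only [cdft, Lop]
  set c : ℂ := ((1 / Real.sqrt N : ℝ) : ℂ) with hc
  -- abbreviation for exponent
  set E : ℤ → ℤ → ℂ := fun k l => Complex.exp (-Complex.I * (2 * π / N) * k * l) with hE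
  -- T1
  have hT1 : ∑ k ∈ In N, E k l * a (k + 1) = ∑ k ∈ In N, E (k - 1) l * a k := by
    have := sum_shift hN1 (fun k => E (k - 1) l * a k) (fun k => by
      simp only [hE]
      push_cast
      rw [show ((k : ℂ) + N - 1) = ((k : ℂ) - 1) + N by ring,
        show k + (N : ℤ) = k + N from rfl, hper]
      congr 1
      have := exp_per N hN0 (k - 1) l
      push_cast at this ⊢
      rw [← this]; try ring_nf)
    simp only [add_sub_cancel_right] at this
    rw [← this]
  have hT2 : ∑ k ∈ In N, E k l * a (k - 1) = ∑ k ∈ In N, E (k + 1) l * a k := by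
    have := sum_shift' hN1 (fun k => E (k + 1) l * a k) (fun k => by
      simp only [hE]
      push_cast
      rw [show k + (N : ℤ) = k + N from rfl, hper]
      congr 1
      have := exp_per N hN0 (k + 1) l
      push_cast at this ⊢
      rw [← this]; try ring_nf)
    simp only [sub_add_cancel] at this
    rw [← this]
  show c * ∑ k ∈ In N, E k l * (a (k + 1) + a (k - 1) + 2 * Real.cos (2 * π * k / N) * a k)
      = c * ∑ k ∈ In N, E k (l + 1) * a k + c * ∑ k ∈ In N, E k (l - 1) * a k
        + 2 * Real.cos (2 * π * l / N) * (c * ∑ k ∈ In N, E k l * a k)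
  have expand : ∑ k ∈ In N, E k l * (a (k + 1) + a (k - 1) + 2 * Real.cos (2 * π * k / N) * a k)
      = (∑ k ∈ In N, E k l * a (k + 1)) + (∑ k ∈ In N, E k l * a (k - 1))
        + ∑ k ∈ In N, E k l * (2 * Real.cos (2 * π * k / N) * a k) := by
    rw [← Finset.sum_add_distrib, ← Finset.sum_add_distrib]
    exact Finset.sum_congr rfl fun k _ => by ring
  rw [expand, hT1, hT2]
  have key : ∀ k ∈ In N,
      E (k - 1) l * a k + E (k + 1) l * a k + E k l * (2 * Real.cos (2 * π * k / N) * a k)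
      = E k (l + 1) * a k + E k (l - 1) * a k
        + 2 * (Real.cos (2 * π * l / N) : ℂ) * (E k l * a k) := by
    intro k _
    have e1 : E (k - 1) l = E k l * Complex.exp (Complex.I * (2 * π / N) * l) := by
      rw [hE]; simp only []
      rw [← Complex.exp_add]; congr 1; push_cast; ring
    have e2 : E (k + 1) l = E k l * Complex.exp (-Complex.I * (2 * π / N) * l) := by
      rw [hE]; simp only []
      rw [← Complex.exp_add]; congr 1; push_cast; ring
    have e3 : E k (l + 1) = E k l * Complex.exp (-Complex.I * (2 * π / N) * k) := by
      rw [hE]; simp only []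
      rw [← Complex.exp_add]; congr 1; push_cast; ring
    have e4 : E k (l - 1) = E k l * Complex.exp (Complex.I * (2 * π / N) * k) := by
      rw [hE]; simp only []
      rw [← Complex.exp_add]; congr 1; push_cast; ring
    have c1 : (2 : ℂ) * (Real.cos (2 * π * l / N) : ℂ)
        = Complex.exp (Complex.I * (2 * π / N) * l) + Complex.exp (-Complex.I * (2 * π / N) * l) := by
      rw [Complex.ofReal_cos, Complex.two_cos]
      congr 1 <;> (congr 1; push_cast; ring)
    have c2 : (2 : ℂ) * (Real.cos (2 * π * k / N) : ℂ)
        = Complex.exp (Complex.I * (2 * π / N) * k) + Complex.exp (-Complex.I * (2 * π / N) * k) := by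
      rw [Complex.ofReal_cos, Complex.two_cos]
      congr 1 <;> (congr 1; push_cast; ring)
    rw [e1, e2, e3, e4,
      show E k l * (2 * (Real.cos (2 * π * k / N) : ℂ) * a k)
        = (2 * (Real.cos (2 * π * k / N) : ℂ)) * (E k l * a k) by ring, c2,
      show (2 : ℂ) * (Real.cos (2 * π * l / N) : ℂ) * (E k l * a k)
        = ((2 : ℂ) * (Real.cos (2 * π * l / N) : ℂ)) * (E k l * a k) by ring, c1]
    ring
  rw [← Finset.sum_add_distrib, ← Finset.sum_add_distrib, Finset.sum_congr rfl key,
    Finset.sum_add_distrib, Finset.sum_add_distrib, ← Finset.mul_sum]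
  ring
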